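/- arXiv:0810.4620 — 2 statements merged into one kernel-verified Lean document; each statement's English description precedes it below -/
import Mathlib

section
/- For a finitely generated abelian group A written as a direct product of cyclic groups ⟨a₁⟩ × ⋯ × ⟨a_s⟩, the tensor square A ⊗ A (over ℤ) decomposes as the internal direct sum of the subgroup ∇(A) generated by {aᵢ ⊗ aᵢ : i} ∪ {(aᵢ ⊗ aⱼ)(aⱼ ⊗ aᵢ) : i < j} and the subgroup generated by {aᵢ ⊗ aⱼ : i < j}. -/
open TensorProduct

section Aux

variable {A : Type*} [AddCommGroup A] {s : ℕ} {a : Fin s → A}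
  (hA : DirectSum.IsInternal fun i : Fin s => Submodule.span ℤ ({a i} : Set A))

/-- Projection onto the `i`-th cyclic factor. -/
noncomputable def myProj (i : Fin s) : A →ₗ[ℤ] A :=
  (Submodule.span ℤ ({a i} : Set A)).subtype ∘ₗ
    (DirectSum.component ℤ (Fin s) (fun i => Submodule.span ℤ ({a i} : Set A)) i) ∘ₗ
    (LinearEquiv.ofBijective (DirectSum.coeLinearMap _) hA).symm.toLinearMap

lemma myProj_apply (i j : Fin s) :
    myProj hA i (a j) = if j = i then a j else 0 := by
  have hmem : a j ∈ Submodule.span ℤ ({a j} : Set A) := Submodule.mem_span_singleton_self _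
  by_cases h : j = i
  · subst h
    simp only [if_pos rfl, myProj, LinearMap.coe_comp, Function.comp_apply,
      LinearEquiv.coe_coe]
    have := hA.ofBijective_coeLinearMap_of_mem (i := j) hmem
    erw [this]
    rfl
  · simp only [if_neg h, myProj, LinearMap.coe_comp, Function.comp_apply, LinearEquiv.coe_coe]
    have : (LinearEquiv.ofBijective (DirectSum.coeLinearMap _) hA).symm
        ((⟨a j, hmem⟩ : Submodule.span ℤ ({a j} : Set A)) : A) i = 0 :=
      hA.ofBijective_coeLinearMap_of_ne h _
    erw [this]
    rfl

/-- Projection of `A ⊗ A` onto the strictly upper-triangular part. -/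
noncomputable def myP : A ⊗[ℤ] A →ₗ[ℤ] A ⊗[ℤ] A :=
  ∑ p ∈ Finset.univ.filter (fun p : Fin s × Fin s => p.1 < p.2),
    TensorProduct.map (myProj hA p.1) (myProj hA p.2)

lemma myP_tmul (i j : Fin s) :
    myP hA (a i ⊗ₜ[ℤ] a j) = if i < j then a i ⊗ₜ[ℤ] a j else 0 := by
  unfold myP; erw [LinearMap.sum_apply]
  simp only [TensorProduct.map_tmul, myProj_apply hA]
  by_cases hij : i < j
  · rw [if_pos hij, Finset.sum_eq_single_of_mem (i, j)
      (by simp [Finset.mem_filter, hij])]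
    · simp
    · intro p _ hp
      rcases ne_or_eq p.1 i with h1 | h1
      · rw [if_neg (Ne.symm h1), TensorProduct.zero_tmul]
      · rcases ne_or_eq p.2 j with h2 | h2
        · rw [if_neg (Ne.symm h2), TensorProduct.tmul_zero]
        · exact absurd (Prod.ext h1 h2) hp
  · rw [if_neg hij, Finset.sum_eq_zero]
    intro p hp
    rw [Finset.mem_filter] at hp
    rcases ne_or_eq p.1 i with h1 | h1
    · rw [if_neg (Ne.symm h1), TensorProduct.zero_tmul]
    rcases ne_or_eq p.2 j with h2 | h2
    · rw [if_neg (Ne.symm h2), TensorProduct.tmul_zero]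
    exact absurd (h1 ▸ h2 ▸ hp.2) hij

end Aux

/-- If `A = ⟨a₁⟩ × ⋯ × ⟨a_s⟩` is a finitely generated abelian group, then `A ⊗ A` is the
internal direct sum of `∇(A) = ⟨aᵢ ⊗ aᵢ, (aᵢ ⊗ aⱼ) + (aⱼ ⊗ aᵢ) (i<j)⟩` and
`⟨aᵢ ⊗ aⱼ (i<j)⟩`. -/
theorem stmt2 (A : Type*) [AddCommGroup A] (s : ℕ) (a : Fin s → A)
    (hA : DirectSum.IsInternal fun i : Fin s => Submodule.span ℤ ({a i} : Set A)) :
    IsCompl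
      (Submodule.span ℤ
        ((Set.range fun i : Fin s => a i ⊗ₜ[ℤ] a i) ∪
          {x : A ⊗[ℤ] A | ∃ i j : Fin s, i < j ∧ x = a i ⊗ₜ[ℤ] a j + a j ⊗ₜ[ℤ] a i}))
      (Submodule.span ℤ {x : A ⊗[ℤ] A | ∃ i j : Fin s, i < j ∧ x = a i ⊗ₜ[ℤ] a j}) := by
  set P := myP hA with hP
  set τ : A ⊗[ℤ] A →ₗ[ℤ] A ⊗[ℤ] A := (TensorProduct.comm ℤ A A).toLinearMap with hτ
  set L : Submodule ℤ (A ⊗[ℤ] A) :=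
    Submodule.span ℤ {x : A ⊗[ℤ] A | ∃ i j : Fin s, i < j ∧ x = a j ⊗ₜ[ℤ] a i} with hL
  constructor
  · -- Disjoint
    rw [Submodule.disjoint_def]
    intro x hxN hxU
    -- τ fixes x
    have hfix : τ x = x := by
      refine LinearMap.eqOn_span (f := τ) (g := LinearMap.id) ?_ hxN
      rintro y (⟨i, rfl⟩ | ⟨i, j, hij, rfl⟩)
      · erw [TensorProduct.comm_tmul]
      · erw [map_add, TensorProduct.comm_tmul, TensorProduct.comm_tmul, add_comm]; rfl
    -- x ∈ L
    have hxL : x ∈ L := by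
      rw [← hfix]
      refine Submodule.span_induction ?_ ?_ ?_ ?_ hxU
      · rintro y ⟨i, j, hij, rfl⟩
        exact Submodule.subset_span ⟨i, j, hij, by erw [TensorProduct.comm_tmul]⟩
      · simp
      · intro y z _ _ hy hz; rw [map_add]; exact add_mem hy hz
      · intro c y _ hy; rw [map_smul]; exact Submodule.smul_mem _ _ hy
    -- P x = x and P x = 0
    have hPx : P x = x := by
      refine LinearMap.eqOn_span (f := P) (g := LinearMap.id) ?_ hxU
      rintro y ⟨i, j, hij, rfl⟩
      simp [hP, myP_tmul hA, hij]
    have hP0 : P x = 0 := by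
      have : L ≤ LinearMap.ker P := by
        rw [Submodule.span_le]
        rintro y ⟨i, j, hij, rfl⟩
        simp [LinearMap.mem_ker, hP, myP_tmul hA, not_lt_of_gt hij]
      exact this hxL
    rw [← hPx, hP0]
  · -- Codisjoint
    rw [codisjoint_iff, eq_top_iff]; erw [← TensorProduct.span_tmul_eq_top ℤ A A,
      Submodule.span_le]
    rintro x ⟨m, n, rfl⟩
    set W : Submodule ℤ (A ⊗[ℤ] A) :=
      Submodule.span ℤ
          ((Set.range fun i : Fin s => a i ⊗ₜ[ℤ] a i) ∪
            {x : A ⊗[ℤ] A | ∃ i j : Fin s, i < j ∧ x = a i ⊗ₜ[ℤ] a j + a j ⊗ₜ[ℤ] a i}) ⊔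
        Submodule.span ℤ {x : A ⊗[ℤ] A | ∃ i j : Fin s, i < j ∧ x = a i ⊗ₜ[ℤ] a j} with hW
    have hgen : ∀ i j : Fin s, a i ⊗ₜ[ℤ] a j ∈ W := by
      intro i j
      rcases lt_trichotomy i j with h | h | h
      · exact Submodule.mem_sup_right (Submodule.subset_span ⟨i, j, h, rfl⟩)
      · subst h
        exact Submodule.mem_sup_left (Submodule.subset_span (Or.inl ⟨i, rfl⟩))
      · have h1 : a j ⊗ₜ[ℤ] a i + a i ⊗ₜ[ℤ] a j ∈ W :=
          Submodule.mem_sup_left (Submodule.subset_span (Or.inr ⟨j, i, h, rfl⟩))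
        have h2 : a j ⊗ₜ[ℤ] a i ∈ W :=
          Submodule.mem_sup_right (Submodule.subset_span ⟨j, i, h, rfl⟩)
        have := sub_mem h1 h2
        simpa using this
    have htop : Submodule.span ℤ (Set.range a) = (⊤ : Submodule ℤ A) := by
      rw [Submodule.span_range_eq_iSup]
      exact hA.submodule_iSup_eq_top
    have hmA : m ∈ Submodule.span ℤ (Set.range a) := htop ▸ Submodule.mem_top
    have hnA : n ∈ Submodule.span ℤ (Set.range a) := htop ▸ Submodule.mem_top
    -- first: a i ⊗ n ∈ W for any n
    have key1 : ∀ i : Fin s, ∀ n ∈ Submodule.span ℤ (Set.range a), a i ⊗ₜ[ℤ] n ∈ W := by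
      intro i n hn
      refine Submodule.span_induction ?_ ?_ ?_ ?_ hn
      · rintro y ⟨j, rfl⟩; exact hgen i j
      · simp
      · intro y z _ _ hy hz; rw [TensorProduct.tmul_add]; exact add_mem hy hz
      · intro c y _ hy; rw [TensorProduct.tmul_smul]; exact Submodule.smul_mem _ _ hy
    refine Submodule.span_induction ?_ ?_ ?_ ?_ hmA
    · rintro y ⟨i, rfl⟩; exact key1 i n hnA
    · rw [TensorProduct.zero_tmul]; exact W.zero_mem
    · intro y z _ _ hy hz; rw [TensorProduct.add_tmul]; exact add_mem hy hz
    · intro c y _ hy; rw [← TensorProduct.smul_tmul']; exact Submodule.smul_mem _ _ hy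
end

section
/- Let A be a finite abelian p-group with p odd. Then the subgroup ∇(A) = ⟨a ⊗ a : a ∈ A⟩ of A ⊗ A satisfies |∇(A)| ≥ p^{d(d+1)/2}, where d is the minimal number of generators of A. -/
open TensorProduct

section Aux

variable (p d : ℕ) {A : Type*} [AddCommGroup A]
  (n : Fin d → ℕ) (hn : ∀ i, 1 ≤ n i) (e : A ≃+ ∀ i : Fin d, ZMod (p ^ n i))

/-- coordinate mod p -/
noncomputable def gmap (i : Fin d) : A →+ ZMod p :=
  ((ZMod.castHom (dvd_pow_self p (Nat.one_le_iff_ne_zero.mp (hn i))) (ZMod p)).toAddMonoidHom.comp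
    ((Pi.evalAddMonoidHom _ i).comp e.toAddMonoidHom))

/-- the bilinear map `(a,b) ↦ fun (i ≤ j) ↦ aᵢbⱼ + aⱼbᵢ` -/
noncomputable def bil : A →ₗ[ℤ] A →ₗ[ℤ] ({q : Fin d × Fin d // q.1 ≤ q.2} → ZMod p) :=
  LinearMap.mk₂ ℤ (fun a b q => gmap p d n hn e q.1.1 a * gmap p d n hn e q.1.2 b
      + gmap p d n hn e q.1.2 a * gmap p d n hn e q.1.1 b)
    (by intro a a' b; funext q; simp [map_add]; ring)
    (by intro z a b; funext q; simp [map_zsmul, zsmul_eq_mul]; ring)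
    (by intro a b b'; funext q; simp [map_add]; ring)
    (by intro z a b; funext q; simp [map_zsmul, zsmul_eq_mul]; ring)

noncomputable def phi : A ⊗[ℤ] A →ₗ[ℤ] ({q : Fin d × Fin d // q.1 ≤ q.2} → ZMod p) :=
  TensorProduct.lift (bil p d n hn e)

theorem gmap_basis (i j : Fin d) :
    gmap p d n hn e j (e.symm (Pi.single i 1)) = if j = i then 1 else 0 := by
  simp only [gmap, AddMonoidHom.comp_apply, AddEquiv.coe_toAddMonoidHom,
    AddEquiv.apply_symm_apply, Pi.evalAddMonoidHom_apply, RingHom.toAddMonoidHom_eq_coe,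
    RingHom.coe_coe, ZMod.castHom_apply]
  by_cases h : j = i
  · subst h
    rw [Pi.single_eq_same]
    simp [ZMod.cast_one (dvd_pow_self p (Nat.one_le_iff_ne_zero.mp (hn j)))]
  · rw [Pi.single_eq_of_ne h]; simp [h]

theorem phi_tmul (a b : A) (q : {q : Fin d × Fin d // q.1 ≤ q.2}) :
    phi p d n hn e (a ⊗ₜ[ℤ] b) q = gmap p d n hn e q.1.1 a * gmap p d n hn e q.1.2 b
      + gmap p d n hn e q.1.2 a * gmap p d n hn e q.1.1 b := rfl

theorem phi_diag (i : Fin d) :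
    phi p d n hn e (e.symm (Pi.single i 1) ⊗ₜ[ℤ] e.symm (Pi.single i 1))
      = Pi.single (⟨(i, i), le_refl i⟩ : {q : Fin d × Fin d // q.1 ≤ q.2}) 2 := by
  funext q
  rcases q with ⟨⟨k, l⟩, hkl⟩
  rw [phi_tmul]
  simp only [gmap_basis, Pi.single_apply, Subtype.mk.injEq, Prod.mk.injEq]
  split_ifs <;> simp_all <;> ring

theorem phi_offdiag {i j : Fin d} (hij : i < j) :
    phi p d n hn e ((e.symm (Pi.single i 1) + e.symm (Pi.single j 1)) ⊗ₜ[ℤ]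
        (e.symm (Pi.single i 1) + e.symm (Pi.single j 1)))
      - phi p d n hn e (e.symm (Pi.single i 1) ⊗ₜ[ℤ] e.symm (Pi.single i 1))
      - phi p d n hn e (e.symm (Pi.single j 1) ⊗ₜ[ℤ] e.symm (Pi.single j 1))
      = Pi.single (⟨(i, j), le_of_lt hij⟩ : {q : Fin d × Fin d // q.1 ≤ q.2}) 2 := by
  funext q
  rcases q with ⟨⟨k, l⟩, hkl⟩
  simp only [Pi.sub_apply, phi_tmul, map_add, gmap_basis, Pi.single_apply,
    Subtype.mk.injEq, Prod.mk.injEq]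
  have hne : i ≠ j := ne_of_lt hij
  split_ifs <;> simp_all
  all_goals try ring
  all_goals exact absurd hkl (not_le.mpr hij)

end Aux

/-- If `A` is a finite abelian `p`-group, `p` odd, with `d` cyclic factors in an invariant
factor type decomposition, then `∇(A) = ⟨a ⊗ a⟩ ≤ A ⊗ A` has order at least `p^(d(d+1)/2)`. -/
theorem stmt11 (p d : ℕ) (hp : p.Prime) (hodd : Odd p) (A : Type*) [AddCommGroup A]
    (n : Fin d → ℕ) (hn : ∀ i, 1 ≤ n i) (e : A ≃+ ∀ i : Fin d, ZMod (p ^ n i)) :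
    p ^ (d * (d + 1) / 2) ≤
      Nat.card (AddSubgroup.closure {x : A ⊗[ℤ] A | ∃ a : A, x = a ⊗ₜ[ℤ] a}) := by
  haveI : Fact p.Prime := ⟨hp⟩
  haveI : ∀ i, NeZero (p ^ n i) := fun i => ⟨pow_ne_zero _ hp.pos.ne'⟩
  haveI : Finite A := Finite.of_equiv _ e.symm.toEquiv
  haveI : Module.Finite ℤ A := Module.Finite.of_finite
  -- the tensor square is finite
  haveI hfg : AddGroup.FG (A ⊗[ℤ] A) := Module.Finite.iff_addGroup_fg.mp
    (Module.Finite.tensorProduct ℤ A A)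
  haveI hfin : Finite (A ⊗[ℤ] A) := by
    refine AddCommGroup.finite_of_fg_torsion _ (fun x => ?_)
    rw [isOfFinAddOrder_iff_nsmul_eq_zero]
    refine ⟨Nat.card A, Nat.card_pos, ?_⟩
    induction x using TensorProduct.induction_on with
    | zero => simp
    | tmul a b =>
        rw [← natCast_zsmul, TensorProduct.smul_tmul', natCast_zsmul, card_nsmul_eq_zero',
          TensorProduct.zero_tmul]
    | add x y hx hy => rw [smul_add, hx, hy, add_zero]
  set Q := {q : Fin d × Fin d // q.1 ≤ q.2} with hQ
  set S := AddSubgroup.closure {x : A ⊗[ℤ] A | ∃ a : A, x = a ⊗ₜ[ℤ] a} with hS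
  set φ' : A ⊗[ℤ] A →+ (Q → ZMod p) := (phi p d n hn e).toAddMonoidHom with hφ'
  set T := AddSubgroup.map φ' S with hT
  have hmem : ∀ a : A, φ' (a ⊗ₜ[ℤ] a) ∈ T := fun a =>
    AddSubgroup.mem_map_of_mem φ' (AddSubgroup.subset_closure ⟨a, rfl⟩)
  have htwo : (2 : ZMod p) ≠ 0 := by
    intro h
    have h2 : ((2 : ℕ) : ZMod p) = 0 := by exact_mod_cast h
    have := (ZMod.natCast_eq_zero_iff 2 p).mp h2
    have hp2 : p = 2 := (Nat.prime_dvd_prime_iff_eq hp Nat.prime_two).mp this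
    rw [hp2] at hodd
    exact absurd (Nat.odd_iff.mp hodd) (by norm_num)
  have hsingle2 : ∀ q : Q, Pi.single q (2 : ZMod p) ∈ T := by
    rintro ⟨⟨i, j⟩, hij⟩
    rcases eq_or_lt_of_le hij with h | h
    · cases h
      have := hmem (e.symm (Pi.single i 1))
      rwa [show φ' (e.symm (Pi.single i 1) ⊗ₜ[ℤ] e.symm (Pi.single i 1))
          = Pi.single (⟨(i, i), le_refl i⟩ : Q) 2 from phi_diag p d n hn e i] at this
    · have hw : φ' ((e.symm (Pi.single i 1) + e.symm (Pi.single j 1)) ⊗ₜ[ℤ]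
            (e.symm (Pi.single i 1) + e.symm (Pi.single j 1)))
          - φ' (e.symm (Pi.single i 1) ⊗ₜ[ℤ] e.symm (Pi.single i 1))
          - φ' (e.symm (Pi.single j 1) ⊗ₜ[ℤ] e.symm (Pi.single j 1)) ∈ T :=
        sub_mem (sub_mem (hmem _) (hmem _)) (hmem _)
      rwa [show φ' ((e.symm (Pi.single i 1) + e.symm (Pi.single j 1)) ⊗ₜ[ℤ]
            (e.symm (Pi.single i 1) + e.symm (Pi.single j 1)))
          - φ' (e.symm (Pi.single i 1) ⊗ₜ[ℤ] e.symm (Pi.single i 1))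
          - φ' (e.symm (Pi.single j 1) ⊗ₜ[ℤ] e.symm (Pi.single j 1))
          = Pi.single (⟨(i, j), le_of_lt h⟩ : Q) 2 from phi_offdiag p d n hn e h] at hw
  have hsingle : ∀ (q : Q) (c : ZMod p), Pi.single q c ∈ T := by
    intro q c
    have hm := AddSubgroup.nsmul_mem T (hsingle2 q) ((2⁻¹ * c : ZMod p).val)
    rwa [← Pi.single_smul, nsmul_eq_mul, ZMod.natCast_rightInverse _, mul_comm,
      ← mul_assoc, mul_inv_cancel₀ htwo, one_mul] at hm
  have hTtop : T = ⊤ := by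
    rw [eq_top_iff]
    intro f _
    rw [← Finset.univ_sum_single f]
    exact AddSubgroup.sum_mem _ fun q _ => hsingle q (f q)
  have hsurj : Function.Surjective
      (fun s : S => (⟨φ' s, AddSubgroup.mem_map_of_mem φ' s.2⟩ : T)) := by
    rintro ⟨y, hy⟩
    rcases AddSubgroup.mem_map.mp hy with ⟨x, hx, rfl⟩
    exact ⟨⟨x, hx⟩, rfl⟩
  have h1 : Nat.card T ≤ Nat.card S := Nat.card_le_card_of_surjective _ hsurj
  have h2 : Nat.card T = Nat.card (Q → ZMod p) := by
    rw [hTtop]; exact Nat.card_congr AddSubgroup.topEquiv.toEquiv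
  have h3 : Nat.card (Q → ZMod p) = p ^ (d * (d + 1) / 2) := by
    rw [Nat.card_fun, Nat.card_zmod]
    congr 1
    rw [Nat.card_eq_fintype_card, ← Fintype.card_congr Sym2.sortEquiv, Sym2.card,
      Fintype.card_fin, Nat.choose_two_right, Nat.add_sub_cancel, Nat.mul_comm]
  rw [← h3, ← h2]
  exact h1
end
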